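/- Let j_1,…,j_n be positive integers and let d_1 ≤ d_2 ≤ … ≤ d_n be positive integers with ∑_{i=1}^n j_i = d_{n−1} + d_n, where n ≥ 2. Then there is a valid two-processor schedule of the jobs j_1,…,j_n for the deadlines d_1,…,d_n if and only if there exists a permutation π of {1,…,n} such that the split multiset of the path with weights j_{π(1)},…,j_{π(n)} equals the multiset {d_1,…,d_{n−1}}. (This is the reduction SCD ≤p WSR₂.) -/

import Mathlib

/-- The multiset of completion times (nonempty prefix sums) of a list of job lengths
executed consecutively on one processor, starting at time 0. -/
def prefixSums (L : List ℕ) : Multiset ℕ :=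
  ((List.range L.length).map (fun k => (L.take (k + 1)).sum) : List ℕ)

/-- A valid two-processor schedule of the multiset of jobs `J` for the multiset of
deadlines `D`: a partition of the jobs into two ordered sequences (one per processor,
executed without idle time starting at time 0) such that the multiset of all
completion times equals `D`. -/
def ValidSchedule (J D : Multiset ℕ) : Prop :=
  ∃ L1 L2 : List ℕ, ((L1 : Multiset ℕ) + (L2 : Multiset ℕ) = J) ∧
    prefixSums L1 + prefixSums L2 = D

/-- The split multiset of the path whose vertices carry the weights listed in `w`:
the multiset of `min (Pℓ, W − Pℓ)` over all proper nonempty prefixes, where `Pℓ` is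
the `ℓ`-th prefix sum and `W` the total weight. -/
def pathSplits (w : List ℕ) : Multiset ℕ :=
  ((List.range (w.length - 1)).map
    (fun k => min ((w.take (k + 1)).sum) (w.sum - (w.take (k + 1)).sum)) : List ℕ)


section Aux

/-- reversing a map over a range -/
lemma revMapRange : ∀ (m : ℕ) (f : ℕ → ℕ),
    (List.map f (List.range m)).reverse = List.map (fun k => f (m - 1 - k)) (List.range m)
  | 0, f => by simp
  | (m+1), f => by
    conv_lhs => rw [show List.range (m+1) = 0 :: (List.range m).map Nat.succ from List.range_succ_eq_map,
      List.map_cons, List.reverse_cons, List.map_map]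
    rw [revMapRange m (f ∘ Nat.succ)]
    conv_rhs => rw [show List.range (m+1) = List.range m ++ [m] from List.range_succ, List.map_append]
    congr 1
    · apply List.map_congr_left
      intro k hk
      rw [List.mem_range] at hk
      simp only [Function.comp_apply]
      congr 1
      omega
    · simp only [List.map_cons, List.map_nil]
      congr 2
      omega

lemma sum_take_add_sum_drop' (l : List ℕ) (n : ℕ) : (l.take n).sum + (l.drop n).sum = l.sum := by
  rw [← List.sum_append, List.take_append_drop]

lemma sum_take_le (l : List ℕ) (n : ℕ) : (l.take n).sum ≤ l.sum := by
  have := sum_take_add_sum_drop' l n; omega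

lemma sum_take_mono (l : List ℕ) {a b : ℕ} (h : a ≤ b) : (l.take a).sum ≤ (l.take b).sum := by
  have h1 : (l.take b).take a = l.take a := by rw [List.take_take]; congr 1; omega
  calc (l.take a).sum = ((l.take b).take a).sum := by rw [h1]
    _ ≤ (l.take b).sum := sum_take_le _ _

lemma sum_take_lt (l : List ℕ) (hpos : ∀ x ∈ l, 0 < x) {a b : ℕ} (h1 : a < b)
    (h2 : b ≤ l.length) : (l.take a).sum < (l.take b).sum := by
  have h3 : (l.take b).take a = l.take a := by rw [List.take_take]; congr 1; omega
  have h4 := sum_take_add_sum_drop' (l.take b) a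
  rw [h3] at h4
  have h5 : ((l.take b).drop a) ≠ [] := by
    apply List.ne_nil_of_length_pos
    rw [List.length_drop, List.length_take]
    omega
  have h6 : 0 < ((l.take b).drop a).sum := by
    apply List.sum_pos
    · intro x hx
      exact hpos x (List.mem_of_mem_take (List.mem_of_mem_drop hx))
    · exact h5
  omega

lemma sum_take_reverse (l : List ℕ) (t : ℕ) : (l.reverse.take t).sum = l.sum - (l.take (l.length - t)).sum := by
  rcases le_or_gt t l.length with h | h
  · have h1 : (l.reverse.take t) = (l.drop (l.length - t)).reverse := by
      rw [List.reverse_drop]; congr 1; omega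
    rw [h1, List.sum_reverse]
    have h2 := sum_take_add_sum_drop' l (l.length - t)
    omega
  · rw [List.take_of_length_le (by simpa using h.le), List.sum_reverse]
    have : l.length - t = 0 := by omega
    rw [this]
    simp

lemma prefixSums_take (w : List ℕ) {c : ℕ} (h : c ≤ w.length) :
    prefixSums (w.take c) = (((List.range c).map (fun k => (w.take (k+1)).sum) : List ℕ) : Multiset ℕ) := by
  unfold prefixSums
  rw [List.length_take, min_eq_left h]
  congr 1
  apply List.map_congr_left
  intro k hk
  rw [List.mem_range] at hk
  rw [List.take_take]
  congr 2
  omega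

lemma prefixSums_reverse_drop (w : List ℕ) {c : ℕ} (h : c ≤ w.length) :
    prefixSums ((w.drop c).reverse) =
      (((List.range (w.length - c)).map (fun k => w.sum - (w.take (c + k)).sum) : List ℕ) : Multiset ℕ) := by
  unfold prefixSums
  rw [List.length_reverse, List.length_drop]
  have step1 : ∀ k ∈ List.range (w.length - c),
      (((w.drop c).reverse).take (k+1)).sum = w.sum - (w.take (w.length - 1 - k)).sum := by
    intro k hk
    rw [List.mem_range] at hk
    rw [sum_take_reverse]
    have e1 := sum_take_add_sum_drop' w c
    have hlen : (w.drop c).length = w.length - c := List.length_drop ..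
    rw [hlen]
    have e2 : (w.drop c).take (w.length - c - (k+1)) = (w.take (c + (w.length - c - (k+1)))).drop c := by
      rw [List.drop_take]
      congr 1
      omega
    rw [e2]
    have e3 := sum_take_add_sum_drop' (w.take (c + (w.length - c - (k+1)))) c
    rw [List.take_take, min_eq_left (by omega)] at e3
    have e4 : c + (w.length - c - (k+1)) = w.length - 1 - k := by omega
    rw [e4] at e3 ⊢
    have e5 : (w.take (w.length - 1 - k)).sum ≤ w.sum := sum_take_le ..
    have e6 : (w.take c).sum ≤ (w.take (w.length - 1 - k)).sum := sum_take_mono w (by omega)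
    omega
  rw [List.map_congr_left step1]
  rw [show ((List.map (fun k => w.sum - (w.take (w.length - 1 - k)).sum) (List.range (w.length - c)) : List ℕ) : Multiset ℕ)
      = ((List.map (fun k => w.sum - (w.take (w.length - 1 - k)).sum) (List.range (w.length - c))).reverse : List ℕ) from
    (Multiset.coe_reverse _).symm]
  rw [revMapRange]
  congr 1
  apply List.map_congr_left
  intro k hk
  rw [List.mem_range] at hk
  have : w.length - 1 - (w.length - c - 1 - k) = c + k := by omega
  rw [this]

end Aux

lemma core (w : List ℕ) (c : ℕ) (hc1 : 1 ≤ c) (hc2 : c < w.length)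
    (H1 : ∀ ℓ, 1 ≤ ℓ → ℓ < c → 2 * (w.take ℓ).sum ≤ w.sum)
    (H2 : ∀ ℓ, c < ℓ → ℓ < w.length → w.sum ≤ 2 * (w.take ℓ).sum) :
    prefixSums (w.take c) + prefixSums ((w.drop c).reverse)
      = pathSplits w + {w.sum - min ((w.take c).sum) (w.sum - (w.take c).sum)} := by
  rw [prefixSums_take w hc2.le, prefixSums_reverse_drop w hc2.le]
  unfold pathSplits
  have hr1 : List.range c = List.range (c-1) ++ [c-1] := by
    conv_lhs => rw [show c = (c-1)+1 by omega]
    exact List.range_succ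
  have hr2 : List.range (w.length - c) = 0 :: (List.range (w.length-c-1)).map Nat.succ := by
    conv_lhs => rw [show w.length - c = (w.length-c-1)+1 by omega]
    exact List.range_succ_eq_map
  have hr3 : List.range (w.length - 1)
      = (List.range (c-1) ++ [c-1]) ++ ((List.range (w.length-1-c)).map (fun i => c + i)) := by
    rw [← hr1]
    conv_lhs => rw [show w.length - 1 = c + (w.length-1-c) by omega]
    exact List.range_add
  rw [hr1, hr2, hr3]
  simp only [List.map_append, List.map_cons, List.map_map, List.map_nil]
  have eqA : List.map (fun k => (w.take (k+1)).sum) (List.range (c-1))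
      = List.map (fun k => min ((w.take (k+1)).sum) (w.sum - (w.take (k+1)).sum)) (List.range (c-1)) := by
    apply List.map_congr_left
    intro k hk
    rw [List.mem_range] at hk
    have h1 := H1 (k+1) (by omega) (by omega)
    have h2 := sum_take_le w (k+1)
    rw [min_eq_left (by omega)]
  have eqB : List.map ((fun k => w.sum - (w.take (c + k)).sum) ∘ Nat.succ) (List.range (w.length-c-1))
      = List.map ((fun k => min ((w.take (k+1)).sum) (w.sum - (w.take (k+1)).sum)) ∘ (fun i => c + i))
          (List.range (w.length-1-c)) := by
    rw [show w.length - c - 1 = w.length - 1 - c by omega]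
    apply List.map_congr_left
    intro k hk
    rw [List.mem_range] at hk
    have h1 := H2 (c+k+1) (by omega) (by omega)
    have h2 := sum_take_le w (c+k+1)
    simp only [Function.comp_apply]
    rw [show c + Nat.succ k = c + k + 1 by omega, show c + k + 1 = c + k + 1 from rfl]
    rw [min_eq_right (by omega)]
  have hcc : c - 1 + 1 = c := by omega
  have pair : ({(w.take c).sum} + {w.sum - (w.take c).sum} : Multiset ℕ)
      = {min ((w.take c).sum) (w.sum - (w.take c).sum)}
        + {w.sum - min ((w.take c).sum) (w.sum - (w.take c).sum)} := by
    have hle := sum_take_le w c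
    rcases le_total ((w.take c).sum) (w.sum - (w.take c).sum) with h | h
    · rw [min_eq_left h]
    · rw [min_eq_right h, show w.sum - (w.sum - (w.take c).sum) = (w.take c).sum by omega, add_comm]
  rw [eqA, eqB, hcc]
  simp only [← Multiset.coe_add, ← Multiset.cons_coe, ← Multiset.singleton_add, Nat.add_zero,
    Multiset.coe_nil, add_zero]
  rw [show ∀ (X Y a b : Multiset ℕ), X + a + (b + Y) = X + Y + (a + b) from fun X Y a b => by abel]
  rw [pair]
  abel

lemma sum_take_lt_sum (l : List ℕ) (hpos : ∀ x ∈ l, 0 < x) {a : ℕ} (h : a < l.length) :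
    (l.take a).sum < l.sum := by
  have := sum_take_lt l hpos h (le_refl l.length)
  rwa [List.take_length] at this

lemma mem_prefixSums {L : List ℕ} {k : ℕ} (h : k < L.length) :
    (L.take (k+1)).sum ∈ prefixSums L := by
  unfold prefixSums
  rw [Multiset.mem_coe, List.mem_map]
  exact ⟨k, List.mem_range.2 h, rfl⟩

lemma sum_mem_prefixSums {L : List ℕ} (h : L ≠ []) : L.sum ∈ prefixSums L := by
  have hlen : 0 < L.length := List.length_pos_iff.2 h
  have := mem_prefixSums (L := L) (k := L.length - 1) (by omega)
  rwa [show L.length - 1 + 1 = L.length by omega, List.take_length] at this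

lemma exists_of_mem_prefixSums {L : List ℕ} {x : ℕ} (h : x ∈ prefixSums L) :
    ∃ k, k < L.length ∧ x = (L.take (k+1)).sum := by
  unfold prefixSums at h
  rw [Multiset.mem_coe, List.mem_map] at h
  obtain ⟨k, hk, hx⟩ := h
  exact ⟨k, List.mem_range.1 hk, hx.symm⟩

lemma le_sum_of_mem_prefixSums {L : List ℕ} {x : ℕ} (h : x ∈ prefixSums L) : x ≤ L.sum := by
  obtain ⟨k, _, rfl⟩ := exists_of_mem_prefixSums h
  exact sum_take_le L (k+1)

lemma mem_pathSplits {w : List ℕ} {ℓ : ℕ} (h1 : 1 ≤ ℓ) (h2 : ℓ < w.length) :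
    min ((w.take ℓ).sum) (w.sum - (w.take ℓ).sum) ∈ pathSplits w := by
  unfold pathSplits
  rw [Multiset.mem_coe, List.mem_map]
  exact ⟨ℓ - 1, List.mem_range.2 (by omega), by rw [show ℓ - 1 + 1 = ℓ by omega]⟩

lemma exists_of_mem_pathSplits {w : List ℕ} {x : ℕ} (h : x ∈ pathSplits w) :
    ∃ k, k < w.length - 1 ∧ x = min ((w.take (k+1)).sum) (w.sum - (w.take (k+1)).sum) := by
  unfold pathSplits at h
  rw [Multiset.mem_coe, List.mem_map] at h
  obtain ⟨k, hk, hx⟩ := h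
  exact ⟨k, List.mem_range.1 hk, hx.symm⟩

lemma exists_tuple_of_length (l : List ℕ) (n : ℕ) (hl : l.length = n) :
    ∃ g : Fin n → ℕ, List.ofFn g = l := by
  subst hl; exact ⟨l.get, List.ofFn_get l⟩

lemma exists_perm_eq_ofFn {n : ℕ} (f : Fin n → ℕ) (l : List ℕ) (h : l.Perm (List.ofFn f)) :
    ∃ σ : Equiv.Perm (Fin n), List.ofFn (f ∘ σ) = l := by
  have hl : l.length = n := by simpa using h.length_eq
  obtain ⟨g, hg⟩ := exists_tuple_of_length l n hl
  have hperm : (List.ofFn g).Perm (List.ofFn f) := hg ▸ h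
  have hp : (List.ofFn (f ∘ Tuple.sort f)).Perm (List.ofFn (g ∘ Tuple.sort g)) :=
    (((Tuple.sort f).ofFn_comp_perm f).trans hperm.symm).trans
      ((Tuple.sort g).ofFn_comp_perm g).symm
  have heq : List.ofFn (f ∘ Tuple.sort f) = List.ofFn (g ∘ Tuple.sort g) :=
    List.Perm.eq_of_sortedLE (Tuple.monotone_sort f).sortedLE_ofFn
      (Tuple.monotone_sort g).sortedLE_ofFn hp
  have hfun : f ∘ Tuple.sort f = g ∘ Tuple.sort g := List.ofFn_inj.mp heq
  refine ⟨(Tuple.sort g).symm.trans (Tuple.sort f), ?_⟩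
  rw [← hg]
  congr 1
  funext i
  have := congrFun hfun ((Tuple.sort g).symm i)
  simpa using this

lemma dchain {n : ℕ} {d : ℕ → ℕ} (hdmono : ∀ i, 1 ≤ i → i < n → d i ≤ d (i + 1)) :
    ∀ a b, 1 ≤ a → a ≤ b → b ≤ n → d a ≤ d b := by
  intro a b ha hab hbn
  induction b with
  | zero => omega
  | succ b ih =>
    rcases Nat.eq_or_lt_of_le hab with h | h
    · rw [h]
    · exact le_trans (ih (by omega) (by omega)) (hdmono b (by omega) (by omega))

lemma icc_val_eq (n : ℕ) : (Finset.Icc 1 n).val = ((List.range' 1 n : List ℕ) : Multiset ℕ) := by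
  rw [Nat.Icc_eq_range']
  show ((List.range' 1 (n + 1 - 1) : List ℕ) : Multiset ℕ) = _
  congr 1

lemma icc_val_map (n : ℕ) (f : ℕ → ℕ) :
    (Finset.Icc 1 n).val.map f = ((List.ofFn (fun i : Fin n => f ((i : ℕ) + 1)) : List ℕ) : Multiset ℕ) := by
  rw [icc_val_eq, Multiset.map_coe, Multiset.coe_eq_coe, List.ofFn_eq_map]
  have h1 : List.map (fun i : Fin n => f ((i : ℕ) + 1)) (List.finRange n)
      = List.map (fun k => f (k + 1)) (List.map Fin.val (List.finRange n)) := by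
    rw [List.map_map]; rfl
  rw [h1, List.map_coe_finRange_eq_range, List.range'_eq_map_range, List.map_map]
  apply List.Perm.of_eq
  apply List.map_congr_left
  intro k _
  simp [Nat.add_comm]

lemma icc_split (n : ℕ) (hn : 1 ≤ n) (f : ℕ → ℕ) :
    (Finset.Icc 1 n).val.map f = (Finset.Icc 1 (n-1)).val.map f + {f n} := by
  rw [icc_val_eq, icc_val_eq, Multiset.map_coe, Multiset.map_coe]
  conv_lhs => rw [show n = (n-1)+1 by omega]
  rw [List.range'_concat, List.map_append, ← Multiset.coe_add]
  congr 1
  simp only [List.map_cons, List.map_nil, Multiset.coe_singleton]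
  congr 2
  omega

lemma exists_of_mem_iccmap {n : ℕ} {f : ℕ → ℕ} {x : ℕ} (h : x ∈ (Finset.Icc 1 n).val.map f) :
    ∃ i, 1 ≤ i ∧ i ≤ n ∧ x = f i := by
  rw [Multiset.mem_map] at h
  obtain ⟨i, hi, hx⟩ := h
  rw [Finset.mem_val, Finset.mem_Icc] at hi
  exact ⟨i, hi.1, hi.2, hx.symm⟩

lemma mem_iccmap {n i : ℕ} (f : ℕ → ℕ) (h1 : 1 ≤ i) (h2 : i ≤ n) :
    f i ∈ (Finset.Icc 1 n).val.map f := by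
  rw [Multiset.mem_map]
  exact ⟨i, Finset.mem_def.1 (Finset.mem_Icc.2 ⟨h1, h2⟩), rfl⟩

lemma fwd_aux (n : ℕ) (hn : 2 ≤ n) (j d : ℕ → ℕ)
    (hjpos : ∀ i, 1 ≤ i → i ≤ n → 0 < j i)
    (hdpos : ∀ i, 1 ≤ i → i ≤ n → 0 < d i)
    (hdmono : ∀ i, 1 ≤ i → i < n → d i ≤ d (i + 1))
    (hsum : ∑ i ∈ Finset.Icc 1 n, j i = d (n - 1) + d n)
    (L1 L2 : List ℕ)
    (hJ : ((L1 : Multiset ℕ) + (L2 : Multiset ℕ)) = (Finset.Icc 1 n).val.map j)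
    (hD : prefixSums L1 + prefixSums L2 = (Finset.Icc 1 n).val.map d)
    (hle : L1.sum ≤ L2.sum) :
    ∃ π : Equiv.Perm (Fin n),
      pathSplits (List.ofFn (fun i : Fin n => j ((π i : ℕ) + 1))) =
        (Finset.Icc 1 (n - 1)).val.map d := by
  have hd1n : d (n-1) ≤ d n := by
    have := hdmono (n-1) (by omega) (by omega)
    rwa [Nat.sub_add_cancel (by omega)] at this
  have hdanypos : 0 < d (n-1) := hdpos (n-1) (by omega) (by omega)
  have hdn : 0 < d n := hdpos n (by omega) (by omega)
  -- sums
  have hWsum : L1.sum + L2.sum = d (n-1) + d n := by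
    have h1 := congrArg Multiset.sum hJ
    rw [Multiset.sum_add, Multiset.sum_coe, Multiset.sum_coe] at h1
    have h2 : ((Finset.Icc 1 n).val.map j).sum = ∑ i ∈ Finset.Icc 1 n, j i := rfl
    rw [h2, hsum] at h1
    exact h1
  -- positivity of entries
  have hpos2 : ∀ x ∈ L2, 0 < x := by
    intro x hx
    have : x ∈ ((L1 : Multiset ℕ) + (L2 : Multiset ℕ)) :=
      Multiset.mem_add.2 (Or.inr (Multiset.mem_coe.2 hx))
    rw [hJ] at this
    obtain ⟨i, h1, h2, rfl⟩ := exists_of_mem_iccmap this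
    exact hjpos i h1 h2
  -- upper bound for deadlines
  have hub : ∀ x ∈ (Finset.Icc 1 n).val.map d, x ≤ L2.sum := by
    intro x hx
    rw [← hD] at hx
    rcases Multiset.mem_add.1 hx with h | h
    · exact le_trans (le_sum_of_mem_prefixSums h) hle
    · exact le_sum_of_mem_prefixSums h
  have hL2ne : L2 ≠ [] := by
    intro h
    have h0 : L2.sum = 0 := by rw [h]; rfl
    omega
  have hS2mem : L2.sum ∈ (Finset.Icc 1 n).val.map d := by
    rw [← hD]
    exact Multiset.mem_add.2 (Or.inr (sum_mem_prefixSums hL2ne))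
  have hS2 : L2.sum = d n := by
    obtain ⟨i, hi1, hi2, hx⟩ := exists_of_mem_iccmap hS2mem
    have h1 : L2.sum ≤ d n := hx ▸ dchain hdmono i n hi1 hi2 (le_refl n)
    have h2 : d n ≤ L2.sum := hub (d n) (mem_iccmap d (by omega) (le_refl n))
    omega
  have hS1 : L1.sum = d (n-1) := by omega
  have hL1ne : L1 ≠ [] := by
    intro h
    rw [h] at hS1
    simp at hS1
    omega
  -- the path
  set w : List ℕ := L1 ++ L2.reverse with hw
  set c : ℕ := L1.length with hc
  have hlen12 : L1.length + L2.length = n := by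
    have h1 := congrArg Multiset.card hJ
    rw [Multiset.card_add, Multiset.coe_card, Multiset.coe_card, Multiset.card_map] at h1
    rw [Finset.card_val, Nat.card_Icc] at h1
    omega
  have hwlen : w.length = n := by
    rw [hw, List.length_append, List.length_reverse]; omega
  have hwsum : w.sum = d (n-1) + d n := by
    rw [hw, List.sum_append, List.sum_reverse]; omega
  have hc1 : 1 ≤ c := by
    have := List.length_pos_iff.2 hL1ne; omega
  have hc2 : c < w.length := by
    have := List.length_pos_iff.2 hL2ne
    rw [hwlen]; omega
  have htake : w.take c = L1 := List.take_left
  have hdrop : (w.drop c).reverse = L2 := by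
    rw [hw, hc, List.drop_left, List.reverse_reverse]
  have hPc : (w.take c).sum = d (n-1) := by rw [htake, hS1]
  -- hypotheses of core
  have H1 : ∀ ℓ, 1 ≤ ℓ → ℓ < c → 2 * (w.take ℓ).sum ≤ w.sum := by
    intro ℓ h1 h2
    have h3 : w.take ℓ = L1.take ℓ := by
      rw [← htake, List.take_take, min_eq_left (by omega)]
    have h4 : (L1.take ℓ).sum ≤ L1.sum := sum_take_le L1 ℓ
    rw [h3]
    omega
  have H2 : ∀ ℓ, c < ℓ → ℓ < w.length → w.sum ≤ 2 * (w.take ℓ).sum := by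
    intro ℓ h1 h2
    set t : ℕ := ℓ - c with ht
    have htL : t < L2.length := by
      rw [hwlen] at h2; omega
    have htake2 : w.take ℓ = L1 ++ (L2.reverse.take t) := by
      rw [hw, show ℓ = L1.length + t by omega]
      exact List.take_length_add_append t
    have hrev : (L2.reverse.take t).sum = L2.sum - (L2.take (L2.length - t)).sum :=
      sum_take_reverse L2 t
    set s : ℕ := L2.length - t with hs
    have hs1 : 1 ≤ s := by omega
    have hs2 : s < L2.length := by omega
    have hRmem : (L2.take s).sum ∈ prefixSums L2 := by
      have := mem_prefixSums (L := L2) (k := s - 1) (by omega)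
      rwa [show s - 1 + 1 = s by omega] at this
    have hRD : (L2.take s).sum ∈ (Finset.Icc 1 n).val.map d := by
      rw [← hD]
      exact Multiset.mem_add.2 (Or.inr hRmem)
    have hRlt : (L2.take s).sum < L2.sum := sum_take_lt_sum L2 hpos2 hs2
    have hRle : (L2.take s).sum ≤ d (n-1) := by
      obtain ⟨i, hi1, hi2, hx⟩ := exists_of_mem_iccmap hRD
      have hine : i ≠ n := by
        intro h
        rw [h] at hx
        omega
      exact hx ▸ dchain hdmono i (n-1) hi1 (by omega) (by omega)
    have hRles : (L2.take s).sum ≤ L2.sum := sum_take_le L2 s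
    rw [htake2]
    simp only [List.sum_append]
    rw [hrev]
    have hws := hwsum
    omega
  have hcore := core w c hc1 hc2 H1 H2
  rw [htake, hdrop, hS1] at hcore
  have hmin : w.sum - min (d (n-1)) (w.sum - d (n-1)) = d n := by
    rw [min_eq_left (by omega)]
    omega
  rw [hmin, hD] at hcore
  have hsplitw : pathSplits w = (Finset.Icc 1 (n-1)).val.map d := by
    have hspl := icc_split n (by omega) d
    rw [hspl] at hcore
    exact (add_right_cancel hcore).symm
  -- extract the permutation
  have hwperm : w.Perm (List.ofFn (fun i : Fin n => j ((i : ℕ) + 1))) := by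
    rw [← Multiset.coe_eq_coe]
    rw [← icc_val_map n j, ← hJ, hw]
    rw [← Multiset.coe_add]
    congr 1
    exact Multiset.coe_reverse L2
  obtain ⟨σ, hσ⟩ := exists_perm_eq_ofFn (fun i : Fin n => j ((i : ℕ) + 1)) w hwperm
  refine ⟨σ, ?_⟩
  have : (fun i : Fin n => j ((σ i : ℕ) + 1)) = (fun i : Fin n => j ((i : ℕ) + 1)) ∘ σ := rfl
  rw [this, hσ, hsplitw]

/-- SCD ≤p WSR₂: for positive jobs `j 1, …, j n` and sorted positive
deadlines `d 1 ≤ … ≤ d n` with `∑ j = d (n-1) + d n` and `n ≥ 2`, there is a valid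
two-processor schedule iff some permutation of the jobs, taken as vertex weights of a
path, has split multiset `{d 1, …, d (n-1)}`. -/
theorem stmt_9 (n : ℕ) (hn : 2 ≤ n) (j d : ℕ → ℕ)
    (hjpos : ∀ i, 1 ≤ i → i ≤ n → 0 < j i)
    (hdpos : ∀ i, 1 ≤ i → i ≤ n → 0 < d i)
    (hdmono : ∀ i, 1 ≤ i → i < n → d i ≤ d (i + 1))
    (hsum : ∑ i ∈ Finset.Icc 1 n, j i = d (n - 1) + d n) :
    ValidSchedule ((Finset.Icc 1 n).val.map j) ((Finset.Icc 1 n).val.map d) ↔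
    ∃ π : Equiv.Perm (Fin n),
      pathSplits (List.ofFn (fun i : Fin n => j ((π i : ℕ) + 1))) =
        (Finset.Icc 1 (n - 1)).val.map d := by
  constructor
  · rintro ⟨L1, L2, hJ, hD⟩
    rcases le_total L1.sum L2.sum with h | h
    · exact fwd_aux n hn j d hjpos hdpos hdmono hsum L1 L2 hJ hD h
    · exact fwd_aux n hn j d hjpos hdpos hdmono hsum L2 L1
        (by rw [add_comm]; exact hJ) (by rw [add_comm]; exact hD) h
  · rintro ⟨π, hsplit⟩
    set f : Fin n → ℕ := fun i : Fin n => j ((i : ℕ) + 1) with hf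
    set w : List ℕ := List.ofFn (fun i : Fin n => j ((π i : ℕ) + 1)) with hw
    have hd1n : d (n-1) ≤ d n := by
      have := hdmono (n-1) (by omega) (by omega)
      rwa [Nat.sub_add_cancel (by omega)] at this
    have hJw : (w : Multiset ℕ) = (Finset.Icc 1 n).val.map j := by
      rw [icc_val_map n j, Multiset.coe_eq_coe]
      exact π.ofFn_comp_perm f
    have hwlen : w.length = n := by rw [hw, List.length_ofFn]
    have hposw : ∀ x ∈ w, 0 < x := by
      intro x hx
      rw [hw, List.mem_ofFn] at hx
      obtain ⟨i, rfl⟩ := hx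
      exact hjpos _ (by omega) (by have := (π i).isLt; omega)
    have hwsum : w.sum = d (n-1) + d n := by
      have h1 := congrArg Multiset.sum hJw
      rw [Multiset.sum_coe] at h1
      have h2 : ((Finset.Icc 1 n).val.map j).sum = ∑ i ∈ Finset.Icc 1 n, j i := rfl
      rw [h2, hsum] at h1
      exact h1
    have hmem : d (n-1) ∈ pathSplits w := by
      rw [hsplit]
      exact mem_iccmap d (by omega) (le_refl (n-1))
    obtain ⟨k, hk, hkmin⟩ := exists_of_mem_pathSplits hmem
    set c : ℕ := k + 1 with hcdef
    have hc1 : 1 ≤ c := by omega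
    have hc2 : c < w.length := by omega
    have hkmin' : min ((w.take c).sum) (w.sum - (w.take c).sum) = d (n-1) := hkmin.symm
    have hsplitle : ∀ ℓ, 1 ≤ ℓ → ℓ < w.length →
        min ((w.take ℓ).sum) (w.sum - (w.take ℓ).sum) ≤ d (n-1) := by
      intro ℓ h1 h2
      have hm := mem_pathSplits h1 h2
      rw [hsplit] at hm
      obtain ⟨i, hi1, hi2, hx⟩ := exists_of_mem_iccmap hm
      exact hx ▸ dchain hdmono i (n-1) hi1 hi2 (by omega)
    have H1 : ∀ ℓ, 1 ≤ ℓ → ℓ < c → 2 * (w.take ℓ).sum ≤ w.sum := by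
      intro ℓ h1 h2
      by_contra hcon
      push_neg at hcon
      have hle1 := sum_take_le w ℓ
      have hle2 := sum_take_le w c
      have hlt : (w.take ℓ).sum < (w.take c).sum := sum_take_lt w hposw h2 hc2.le
      have hm := hsplitle ℓ h1 (by omega)
      rw [min_eq_right (by omega)] at hm
      have h3 : d (n-1) ≤ w.sum - (w.take c).sum := by
        rw [← hkmin']
        exact min_le_right _ _
      omega
    have H2 : ∀ ℓ, c < ℓ → ℓ < w.length → w.sum ≤ 2 * (w.take ℓ).sum := by
      intro ℓ h1 h2
      by_contra hcon
      push_neg at hcon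
      have hlt : (w.take c).sum < (w.take ℓ).sum := sum_take_lt w hposw h1 h2.le
      have hm := hsplitle ℓ (by omega) h2
      rw [min_eq_left (by omega)] at hm
      have h3 : d (n-1) ≤ (w.take c).sum := by
        rw [← hkmin']
        exact min_le_left _ _
      omega
    have hcore := core w c hc1 hc2 H1 H2
    rw [hkmin'] at hcore
    rw [show w.sum - d (n-1) = d n by omega] at hcore
    rw [hsplit] at hcore
    refine ⟨w.take c, (w.drop c).reverse, ?_, ?_⟩
    · rw [Multiset.coe_reverse, Multiset.coe_add, ← hJw]
      congr 1
      exact List.take_append_drop c w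
    · rw [hcore, ← icc_split n (by omega) d]
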